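/- Let V, H be positive integers, W ∈ ℝ^{V×H} with rows w_1,…,w_V, and x ∈ [−1,1]^V. Then the encoding objective e ↦ Σ_{v=1}^V β_v^W(e, x) = Σ_{v=1}^V [ −x_v·(w_vᵀe) + Ψ(w_vᵀe) ] is convex on ℝ^H and Lipschitz continuous with respect to the Euclidean norm with Lipschitz constant at most 2·Σ_{v=1}^V ‖w_v‖₂. -/

import Mathlib

/-- The potential well `Ψ(m) = ln(1+eᵐ) + ln(1+e⁻ᵐ)`. -/
noncomputable def Psi (m : ℝ) : ℝ := Real.log (1 + Real.exp m) + Real.log (1 + Real.exp (-m))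

open Real Finset

/-- helper: `log(1+e^t)` is monotone. -/
lemma logexp_mono {a b : ℝ} (h : a ≤ b) :
    Real.log (1 + Real.exp a) ≤ Real.log (1 + Real.exp b) :=
  Real.log_le_log (by positivity) (by linarith [Real.exp_le_exp.2 h])

/-- helper: `log(1+e^t)` is `1`-Lipschitz upwards. -/
lemma logexp_sub_le {a b : ℝ} (h : b ≤ a) :
    Real.log (1 + Real.exp a) - Real.log (1 + Real.exp b) ≤ a - b := by
  have h1 : (1:ℝ) ≤ Real.exp (a - b) := Real.one_le_exp (by linarith)
  have hmul : Real.exp (a - b) * Real.exp b = Real.exp a := by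
    rw [← Real.exp_add]; ring_nf
  have key : 1 + Real.exp a ≤ Real.exp (a - b) * (1 + Real.exp b) := by
    nlinarith [Real.exp_pos b]
  have := Real.log_le_log (by positivity) key
  rw [Real.log_mul (by positivity) (by positivity), Real.log_exp] at this
  linarith

lemma psi_lipschitz (a b : ℝ) : |Psi a - Psi b| ≤ |a - b| := by
  rcases le_total b a with h | h
  · rw [abs_of_nonneg (sub_nonneg.2 h), abs_le]
    constructor
    · have h1 := logexp_mono h
      have h2 := logexp_sub_le (a := -b) (b := -a) (by linarith)
      simp only [Psi]; linarith
    · have h1 := logexp_sub_le h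
      have h2 := logexp_mono (a := -a) (b := -b) (by linarith)
      simp only [Psi]; linarith
  · rw [abs_sub_comm a b, abs_of_nonneg (sub_nonneg.2 h), abs_le]
    constructor
    · have h1 := logexp_sub_le h
      have h2 := logexp_mono (a := -b) (b := -a) (by linarith)
      simp only [Psi]; linarith
    · have h1 := logexp_mono h
      have h2 := logexp_sub_le (a := -a) (b := -b) (by linarith)
      simp only [Psi]; linarith

lemma hasDerivAt_psi (m : ℝ) :
    HasDerivAt Psi (Real.exp m / (1 + Real.exp m) - Real.exp (-m) / (1 + Real.exp (-m))) m := by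
  have h1 : HasDerivAt (fun t : ℝ => Real.log (1 + Real.exp t))
      (Real.exp m / (1 + Real.exp m)) m :=
    ((Real.hasDerivAt_exp m).const_add 1).log (by positivity)
  have h2 : HasDerivAt (fun t : ℝ => -t) (-1 : ℝ) m := (hasDerivAt_id m).neg
  have h3 : HasDerivAt (fun t : ℝ => Real.exp (-t)) (-Real.exp (-m)) m := by
    simpa [Function.comp_def] using (Real.hasDerivAt_exp (-m)).comp m h2
  have h4 : HasDerivAt (fun t : ℝ => Real.log (1 + Real.exp (-t)))
      (-Real.exp (-m) / (1 + Real.exp (-m))) m :=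
    (h3.const_add 1).log (by positivity)
  have := h1.add h4
  rw [show Psi = (fun t => Real.log (1 + Real.exp t)) + fun t => Real.log (1 + Real.exp (-t)) from funext fun t => rfl]
  simpa [Psi, sub_eq_add_neg, neg_div] using this

lemma deriv_psi_eq (m : ℝ) :
    deriv Psi m = 1 / (1 + Real.exp (-m)) - 1 / (1 + Real.exp m) := by
  rw [(hasDerivAt_psi m).deriv]
  have hem := Real.exp_pos m
  have henm := Real.exp_pos (-m)
  have hprod : Real.exp m * Real.exp (-m) = 1 := by
    rw [← Real.exp_add]; simp
  field_simp
  nlinarith [hem, henm]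

lemma psi_convex : ConvexOn ℝ Set.univ Psi := by
  apply Monotone.convexOn_univ_of_deriv
  · exact fun m => (hasDerivAt_psi m).differentiableAt
  · intro a b hab
    rw [deriv_psi_eq, deriv_psi_eq]
    have h1 : 1 / (1 + Real.exp (-a)) ≤ 1 / (1 + Real.exp (-b)) := by
      apply one_div_le_one_div_of_le (by positivity)
      linarith [Real.exp_le_exp.2 (neg_le_neg hab)]
    have h2 : 1 / (1 + Real.exp b) ≤ 1 / (1 + Real.exp a) := by
      apply one_div_le_one_div_of_le (by positivity)
      linarith [Real.exp_le_exp.2 hab]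
    linarith

/-- dot product as a linear map -/
noncomputable def dotL {n : ℕ} (w : Fin n → ℝ) : (Fin n → ℝ) →ₗ[ℝ] ℝ where
  toFun e := ∑ h, w h * e h
  map_add' e f := by simp [mul_add, Finset.sum_add_distrib]
  map_smul' c e := by
    simp [Finset.mul_sum, smul_eq_mul]
    congr 1; funext h; ring

theorem encoding_objective_convex_lipschitz
    (V H : ℕ) (hV : 0 < V) (hH : 0 < H)
    (W : Fin V → Fin H → ℝ)
    (x : Fin V → ℝ) (hx : ∀ v, x v ∈ Set.Icc (-1 : ℝ) 1) :
    ConvexOn ℝ Set.univ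
      (fun e : Fin H → ℝ =>
        ∑ v, (-(x v) * (∑ h, W v h * e h) + Psi (∑ h, W v h * e h)))
    ∧
    ∀ e e' : Fin H → ℝ,
      |(∑ v, (-(x v) * (∑ h, W v h * e h) + Psi (∑ h, W v h * e h)))
        - (∑ v, (-(x v) * (∑ h, W v h * e' h) + Psi (∑ h, W v h * e' h)))|
        ≤ (2 * ∑ v, Real.sqrt (∑ h, (W v h) ^ 2)) * Real.sqrt (∑ h, (e h - e' h) ^ 2) := by
  constructor
  · -- convexity
    have hterm : ∀ v : Fin V, ConvexOn ℝ Set.univ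
        (fun e : Fin H → ℝ => -(x v) * (∑ h, W v h * e h) + Psi (∑ h, W v h * e h)) := by
      intro v
      have hlin : ConvexOn ℝ (Set.univ : Set ℝ) (fun t : ℝ => -(x v) * t) :=
        ⟨convex_univ, fun p _ q _ a b _ _ _ => le_of_eq (by simp [smul_eq_mul]; ring)⟩
      have hphi : ConvexOn ℝ (Set.univ : Set ℝ) (fun t : ℝ => -(x v) * t + Psi t) :=
        hlin.add psi_convex
      have := hphi.comp_linearMap (dotL (W v))
      simpa [dotL, Function.comp_def, Set.preimage_univ] using this
    have key : ∀ s : Finset (Fin V), ConvexOn ℝ Set.univ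
        (fun e : Fin H → ℝ => ∑ v ∈ s, (-(x v) * (∑ h, W v h * e h) + Psi (∑ h, W v h * e h))) := by
      intro s
      induction s using Finset.induction with
      | empty => simpa using convexOn_const (0 : ℝ) convex_univ
      | insert _ _ hns ih =>
        simp only [Finset.sum_insert hns]
        exact (hterm _).add ih
    exact key Finset.univ
  · -- Lipschitz
    intro e e'
    set S := Real.sqrt (∑ h, (e h - e' h) ^ 2) with hS
    have hSnn : 0 ≤ S := Real.sqrt_nonneg _
    have hterm : ∀ v : Fin V,
        |(-(x v) * (∑ h, W v h * e h) + Psi (∑ h, W v h * e h))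
          - (-(x v) * (∑ h, W v h * e' h) + Psi (∑ h, W v h * e' h))|
        ≤ 2 * (Real.sqrt (∑ h, (W v h) ^ 2) * S) := by
      intro v
      set t := ∑ h, W v h * e h with ht
      set t' := ∑ h, W v h * e' h with ht'
      have hdiff : t - t' = ∑ h, W v h * (e h - e' h) := by
        rw [ht, ht', ← Finset.sum_sub_distrib]
        exact Finset.sum_congr rfl fun h _ => by ring
      have hCS : |t - t'| ≤ Real.sqrt (∑ h, (W v h) ^ 2) * S := by
        rw [hdiff, abs_le]
        constructor
        · have h2 := Real.sum_mul_le_sqrt_mul_sqrt Finset.univ (W v) (fun h => e' h - e h)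
          simp only [show ∀ h, (e' h - e h) ^ 2 = (e h - e' h) ^ 2 from fun h => by ring] at h2
          have : ∑ h, W v h * (e' h - e h) = -∑ h, W v h * (e h - e' h) := by
            rw [← Finset.sum_neg_distrib]
            exact Finset.sum_congr rfl fun h _ => by ring
          rw [this] at h2
          rw [hS]; linarith
        · have h1 := Real.sum_mul_le_sqrt_mul_sqrt Finset.univ (W v) (fun h => e h - e' h)
          rw [hS]; exact h1
      have hx1 : |x v| ≤ 1 := by
        rcases hx v with ⟨h1, h2⟩; rw [abs_le]; exact ⟨h1, h2⟩
      have hpsi := psi_lipschitz t t'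
      have hrw : (-(x v) * t + Psi t) - (-(x v) * t' + Psi t')
          = -(x v) * (t - t') + (Psi t - Psi t') := by ring
      calc |(-(x v) * t + Psi t) - (-(x v) * t' + Psi t')|
          ≤ |(-(x v)) * (t - t')| + |Psi t - Psi t'| := by rw [hrw]; exact abs_add_le _ _
        _ ≤ |x v| * |t - t'| + |t - t'| := by
            rw [abs_mul, abs_neg]; gcongr
        _ ≤ 1 * |t - t'| + |t - t'| := by
            have := abs_nonneg (t - t'); nlinarith
        _ = 2 * |t - t'| := by ring
        _ ≤ 2 * (Real.sqrt (∑ h, (W v h) ^ 2) * S) := by linarith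
    calc |(∑ v, (-(x v) * (∑ h, W v h * e h) + Psi (∑ h, W v h * e h)))
        - (∑ v, (-(x v) * (∑ h, W v h * e' h) + Psi (∑ h, W v h * e' h)))|
        = |∑ v, ((-(x v) * (∑ h, W v h * e h) + Psi (∑ h, W v h * e h))
            - (-(x v) * (∑ h, W v h * e' h) + Psi (∑ h, W v h * e' h)))| := by
          rw [Finset.sum_sub_distrib]
      _ ≤ ∑ v, |(-(x v) * (∑ h, W v h * e h) + Psi (∑ h, W v h * e h))
            - (-(x v) * (∑ h, W v h * e' h) + Psi (∑ h, W v h * e' h))| :=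
          Finset.abs_sum_le_sum_abs _ _
      _ ≤ ∑ v, 2 * (Real.sqrt (∑ h, (W v h) ^ 2) * S) := Finset.sum_le_sum fun v _ => hterm v
      _ = (2 * ∑ v, Real.sqrt (∑ h, (W v h) ^ 2)) * S := by
          rw [Finset.mul_sum, Finset.sum_mul]
          exact Finset.sum_congr rfl fun v _ => by ring
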